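/- Let d, m, n be positive integers with d > 1 and n = d·m. Then cos(2π/d) belongs to the subfield ℚ(cot(π/n)) of ℝ generated over ℚ by cot(π/n); consequently ℚ(cos(2π/d)) is a subfield of ℚ(cot(π/n)). -/

import Mathlib

open Polynomial Polynomial.Chebyshev in
/-- If `d > 1` and `n = d * m`, then `cos (2π / d)` lies in `ℚ(cot (π / n))`;
consequently `ℚ(cos (2π / d))` is a subfield of `ℚ(cot (π / n))`. -/
theorem cos_two_pi_div_mem_adjoin_cot (d m n : ℕ) (hd : 0 < d) (hm : 0 < m) (hn : 0 < n)
    (hd1 : 1 < d) (hdm : n = d * m) :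
    Real.cos (2 * Real.pi / (d : ℝ)) ∈
        IntermediateField.adjoin ℚ {Real.cot (Real.pi / (n : ℝ))} ∧
      IntermediateField.adjoin ℚ {Real.cos (2 * Real.pi / (d : ℝ))} ≤
        IntermediateField.adjoin ℚ {Real.cot (Real.pi / (n : ℝ))} := by
  have hn2 : 2 ≤ n := by nlinarith
  have hnR : (1 : ℝ) < n := by exact_mod_cast hn2.trans_lt' one_lt_two
  set θ : ℝ := Real.pi / n with hθ
  have hθpos : 0 < θ := div_pos Real.pi_pos (by positivity)
  have hθlt : θ < Real.pi := by
    rw [hθ, div_lt_iff₀ (by positivity)]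
    nlinarith [Real.pi_pos]
  have hsin : Real.sin θ ≠ 0 := ne_of_gt (Real.sin_pos_of_pos_of_lt_pi hθpos hθlt)
  set t : ℝ := Real.cot θ with htdef
  set K := IntermediateField.adjoin ℚ {t} with hK
  have ht : t ∈ K := IntermediateField.mem_adjoin_simple_self ℚ t
  have hx : Real.cos (2 * θ) ∈ K := by
    have hxval : Real.cos (2 * θ) = (t ^ 2 - 1) / (t ^ 2 + 1) := by
      rw [htdef, Real.cot_eq_cos_div_sin, Real.cos_two_mul]
      have hs : Real.sin θ ^ 2 = 1 - Real.cos θ ^ 2 := Real.sin_sq θ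
      have h1 : Real.cos θ ^ 2 / Real.sin θ ^ 2 + 1 ≠ 0 := by positivity
      field_simp
      nlinarith [hs]
    rw [hxval]
    exact div_mem (sub_mem (pow_mem ht 2) (one_mem K)) (add_mem (pow_mem ht 2) (one_mem K))
  have key : Real.cos (2 * Real.pi / d) = Real.cos ((m : ℤ) * (2 * θ)) := by
    congr 1
    rw [hθ, hdm]
    have hd0 : (d : ℝ) ≠ 0 := by positivity
    have hm0 : (m : ℝ) ≠ 0 := by positivity
    push_cast
    field_simp
  have hmem : Real.cos (2 * Real.pi / d) ∈ K := by
    set x' : K := ⟨Real.cos (2 * θ), hx⟩ with hx'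
    have e1 : Real.cos (2 * Real.pi / d) = K.val (aeval x' (T ℚ (m : ℤ))) := by
      rw [key, ← Polynomial.aeval_algHom_apply]
      show _ = aeval (Real.cos (2 * θ)) (T ℚ (m : ℤ))
      rw [Polynomial.aeval_def, ← Polynomial.eval_map, map_T, T_real_cos]
    rw [e1]
    exact (aeval x' (T ℚ (m : ℤ))).2
  exact ⟨hmem, IntermediateField.adjoin_simple_le_iff.mpr hmem⟩
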